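/- Let Q = T[H_1, …, H_t] be a strong semicomplete composition. Then there is an arc between every 3-king of Q and every non-king of Q; moreover, for every non-king u of Q there exists a 3-king v of Q such that d_Q(u, v) > 3 and v dominates u (i.e., the arc vu is in Q). -/

import Mathlib

universe u v

/-- There is a directed walk of length at most `n` from `x` to `y`. -/
def ReachIn {V : Type u} (A : V → V → Prop) : ℕ → V → V → Prop
  | 0 => fun x y => x = y
  | n + 1 => fun x y => x = y ∨ ∃ z, A x z ∧ ReachIn A n z y

/-- A digraph is strong if every vertex can reach every other vertex. -/
def IsStrong {V : Type u} (A : V → V → Prop) : Prop :=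
  ∀ x y : V, Relation.ReflTransGen A x y

/-- A digraph is loopless if it has no loops. -/
def Loopless {V : Type u} (A : V → V → Prop) : Prop := ∀ x, ¬ A x x

/-- A digraph is semicomplete if there is at least one arc between any two distinct vertices. -/
def Semicomplete {V : Type u} (A : V → V → Prop) : Prop :=
  ∀ x y : V, x ≠ y → A x y ∨ A y x

/-- The subdigraph induced on a set `s` of vertices. -/
def Restrict {V : Type u} (A : V → V → Prop) (s : Set V) :
    {v // v ∈ s} → {v // v ∈ s} → Prop := fun x y => A x.1 y.1

/-- `S` is a separator: deleting `S` leaves a non-strong digraph. -/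
def IsSeparator {V : Type u} (A : V → V → Prop) (S : Set V) : Prop :=
  ¬ IsStrong (Restrict A Sᶜ)

/-- A digraph is `k`-strong-connected if every separator has at least `k` vertices. -/
def KStrong {V : Type u} (A : V → V → Prop) (k : ℕ) : Prop :=
  ∀ S : Set V, IsSeparator A S → k ≤ S.ncard

/-- The composition `T[H₁, …, H_t]`. -/
def Comp {t : ℕ} (T : Fin t → Fin t → Prop) (V : Fin t → Type u)
    (H : ∀ i, V i → V i → Prop) : (Σ i, V i) → (Σ i, V i) → Prop :=
  fun p q => T p.1 q.1 ∨ ∃ h : p.1 = q.1, H q.1 (h ▸ p.2) q.2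

/-- The complement of the underlying (simple) graph of a digraph. -/
def complUnderlying {V : Type u} (A : V → V → Prop) : SimpleGraph V where
  Adj x y := x ≠ y ∧ ¬ A x y ∧ ¬ A y x
  symm := ⟨fun x y ⟨h1, h2, h3⟩ => ⟨h1.symm, h3, h2⟩⟩
  loopless := ⟨fun x h => h.1 rfl⟩

/-- `x` is a `k`-king: it reaches every vertex by a path of length at most `k`. -/
def IsKKing {V : Type u} (A : V → V → Prop) (k : ℕ) (x : V) : Prop :=
  ∀ y, ReachIn A k x y

/-- A (directed) path given as a list of vertices. -/
def IsPathList {V : Type u} (A : V → V → Prop) (l : List V) : Prop :=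
  l.Nodup ∧ l.Chain' A

/-- A (directed) cycle given as a list of distinct vertices. -/
def IsCycleList {V : Type u} (A : V → V → Prop) (l : List V) : Prop :=
  2 ≤ l.length ∧ l.Nodup ∧ l.Chain' A ∧
    ∀ x ∈ l.getLast?, ∀ y ∈ l.head?, A x y


section ReachAux

variable {W : Type u} {A : W → W → Prop}

theorem reachIn_succ_def {n : ℕ} {x y : W} :
    ReachIn A (n+1) x y ↔ x = y ∨ ∃ z, A x z ∧ ReachIn A n z y := Iff.rfl

theorem reachIn_refl (A : W → W → Prop) (n : ℕ) (x : W) : ReachIn A n x x := by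
  cases n with
  | zero => rfl
  | succ n => exact Or.inl rfl

theorem reachIn_succ_of : ∀ {n : ℕ} {x y : W}, ReachIn A n x y → ReachIn A (n+1) x y := by
  intro n
  induction n with
  | zero => intro x y h; exact Or.inl h
  | succ n ih =>
    intro x y h
    rcases h with rfl | ⟨z, hz, hr⟩
    · exact Or.inl rfl
    · exact Or.inr ⟨z, hz, ih hr⟩

theorem reachIn_tail : ∀ {n : ℕ} {x z y : W}, ReachIn A n x z → A z y → ReachIn A (n+1) x y := by
  intro n
  induction n with
  | zero =>
    intro x z y h hzy
    obtain rfl : x = z := h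
    exact Or.inr ⟨y, hzy, rfl⟩
  | succ n ih =>
    intro x z y h hzy
    rcases h with rfl | ⟨w, hw, hr⟩
    · exact Or.inr ⟨y, hzy, reachIn_refl A _ y⟩
    · exact Or.inr ⟨w, hw, ih hr hzy⟩

theorem reachIn_succ_iff {n : ℕ} {x y : W} :
    ReachIn A (n+1) x y ↔ ReachIn A n x y ∨ ∃ z, ReachIn A n x z ∧ A z y := by
  constructor
  · show ReachIn A (n+1) x y → _
    revert x y
    induction n with
    | zero =>
      intro x y h
      rcases h with rfl | ⟨z, hz, hr⟩
      · exact Or.inl rfl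
      · obtain rfl : z = y := hr
        exact Or.inr ⟨x, rfl, hz⟩
    | succ n ih =>
      intro x y h
      rcases h with rfl | ⟨z, hz, hr⟩
      · exact Or.inl (reachIn_refl A _ x)
      · rcases ih hr with h1 | ⟨w, hw, hwy⟩
        · exact Or.inl (Or.inr ⟨z, hz, h1⟩)
        · exact Or.inr ⟨w, Or.inr ⟨z, hz, hw⟩, hwy⟩
  · rintro (h | ⟨z, hz, hzy⟩)
    · exact reachIn_succ_of h
    · exact reachIn_tail hz hzy

end ReachAux

section CompAux

variable {t : ℕ} {V : Fin t → Type u} {T : Fin t → Fin t → Prop} {H : ∀ i, V i → V i → Prop}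

theorem comp_part_arc {p q : Σ i, V i} (h : Comp T V H p q) (hne : p.1 ≠ q.1) : T p.1 q.1 := by
  rcases h with h | ⟨he, _⟩
  · exact h
  · exact absurd he hne

theorem comp_arc_reach3 {p q : Σ i, V i} (h : Comp T V H p q) :
    ReachIn (Comp T V H) 3 p q :=
  Or.inr ⟨q, h, reachIn_refl _ 2 q⟩

theorem exitArc {i : Fin t} {a c : Σ i, V i}
    (h : Relation.ReflTransGen (Comp T V H) a c) (ha : a.1 = i) :
    c.1 ≠ i → ∃ j, j ≠ i ∧ T i j := by
  induction h with
  | refl => intro hc; exact absurd ha hc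
  | @tail b c hab hbc ih =>
    intro hc
    by_cases hb : b.1 = i
    · have hT : T b.1 c.1 := comp_part_arc hbc (by rw [hb]; exact Ne.symm hc)
      exact ⟨c.1, hc, by rw [← hb]; exact hT⟩
    · exact ih hb

theorem enterArc {i : Fin t} {a c : Σ i, V i}
    (h : Relation.ReflTransGen (Comp T V H) a c) (ha : a.1 ≠ i) :
    c.1 = i → ∃ j, j ≠ i ∧ T j i := by
  induction h with
  | refl => intro hc; exact absurd hc ha
  | @tail b c hab hbc ih =>
    intro hc
    by_cases hb : b.1 = i
    · exact ih hb
    · have hT : T b.1 c.1 := comp_part_arc hbc (by rw [hc]; exact hb)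
      exact ⟨b.1, hb, by rw [← hc]; exact hT⟩

theorem bridge [∀ i, Nonempty (V i)] (ht : 2 ≤ t) (hsc : Semicomplete T)
    (hstrong : IsStrong (Comp T V H)) (i : Fin t) :
    ∃ j j', j ≠ i ∧ T i j ∧ j' ≠ i ∧ T j' i ∧ (j = j' ∨ T j j') := by
  haveI : Nontrivial (Fin t) := Fin.nontrivial_iff_two_le.mpr ht
  obtain ⟨i', hi'⟩ := exists_ne i
  let a : Σ i, V i := ⟨i, Classical.arbitrary _⟩
  let c : Σ i, V i := ⟨i', Classical.arbitrary _⟩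
  obtain ⟨j0, hj0ne, hj0⟩ := exitArc (hstrong a c) rfl hi'
  by_contra hbr
  push_neg at hbr
  have key : ∀ {p q : Σ i, V i}, Relation.ReflTransGen (Comp T V H) p q →
      (p.1 ≠ i ∧ T i p.1) → (q.1 ≠ i ∧ T i q.1) := by
    intro p q h
    induction h with
    | refl => exact id
    | @tail b c hab hbc ih =>
      intro hp
      obtain ⟨hb, hTib⟩ := ih hp
      rcases hbc with hT | ⟨he, _⟩
      · by_cases hci : c.1 = i
        · have hTbi : T b.1 i := by rw [← hci]; exact hT
          exact absurd rfl (hbr b.1 b.1 hb hTib hb hTbi).1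
        · refine ⟨hci, ?_⟩
          by_cases hTic : T i c.1
          · exact hTic
          · have hTci : T c.1 i := (hsc i c.1 (Ne.symm hci)).resolve_left hTic
            exact absurd hT (hbr b.1 c.1 hb hTib hci hTci).2
      · exact ⟨by rw [← he]; exact hb, by rw [← he]; exact hTib⟩
  let w : Σ i, V i := ⟨j0, Classical.arbitrary _⟩
  have := (key (hstrong w a) ⟨hj0ne, hj0⟩).1
  exact this rfl

theorem reach_same [∀ i, Nonempty (V i)] (ht : 2 ≤ t) (hsc : Semicomplete T)
    (hstrong : IsStrong (Comp T V H)) {a b : Σ i, V i} (hab : a.1 = b.1) :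
    ReachIn (Comp T V H) 3 a b := by
  obtain ⟨j, j', hjne, hTij, hj'ne, hTj'i, hcase⟩ := bridge ht hsc hstrong a.1
  have hw'b : Comp T V H (⟨j', Classical.arbitrary _⟩ : Σ i, V i) b :=
    Or.inl (by rw [← hab]; exact hTj'i)
  rcases hcase with rfl | hTjj'
  · exact Or.inr ⟨⟨j, Classical.arbitrary _⟩, Or.inl hTij,
      Or.inr ⟨b, hw'b, reachIn_refl _ 1 b⟩⟩
  · exact Or.inr ⟨⟨j, Classical.arbitrary _⟩, Or.inl hTij,
      Or.inr ⟨⟨j', Classical.arbitrary _⟩, Or.inl hTjj', Or.inr ⟨b, hw'b, rfl⟩⟩⟩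

theorem shortcut (u : Σ i, V i) :
    ∀ {n : ℕ} {a y : Σ i, V i}, ReachIn (Comp T V H) n a y → a.1 = u.1 → y.1 ≠ u.1 →
      ReachIn (Comp T V H) n u y := by
  intro n
  induction n with
  | zero =>
    intro a y h ha hy
    obtain rfl : a = y := h
    exact absurd ha hy
  | succ n ih =>
    intro a y h ha hy
    rcases h with rfl | ⟨z, hz, hr⟩
    · exact absurd ha hy
    · by_cases hzi : z.1 = u.1
      · exact reachIn_succ_of (ih hr hzi hy)
      · have hT : T a.1 z.1 := comp_part_arc hz (by rw [ha]; exact fun e => hzi e.symm)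
        exact Or.inr ⟨z, Or.inl (by rw [← ha]; exact hT), hr⟩

theorem two_king (hTl : Loopless T) (hsc : Semicomplete T)
    (P : Finset (Fin t)) (hP : P.Nonempty) :
    ∃ i ∈ P, ∀ j ∈ P, i = j ∨ T i j ∨ ∃ m, T i m ∧ T m j := by
  classical
  obtain ⟨i, hiP, hmax⟩ := P.exists_max_image (fun i => (P.filter (fun j => T i j)).card) hP
  refine ⟨i, hiP, fun j hjP => ?_⟩
  by_cases hij : i = j
  · exact Or.inl hij
  by_cases hTij : T i j
  · exact Or.inr (Or.inl hTij)
  refine Or.inr (Or.inr ?_)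
  by_contra hno
  push_neg at hno
  have hTji : T j i := (hsc i j hij).resolve_left hTij
  have hsub : insert i (P.filter (fun m => T i m)) ⊆ P.filter (fun m => T j m) := by
    intro m hm
    rcases Finset.mem_insert.mp hm with rfl | hm
    · exact Finset.mem_filter.mpr ⟨hiP, hTji⟩
    · obtain ⟨hmP, hTim⟩ := Finset.mem_filter.mp hm
      have hmj : m ≠ j := fun e => hTij (e ▸ hTim)
      have hTjm : T j m := (hsc m j hmj).resolve_left (hno m hTim)
      exact Finset.mem_filter.mpr ⟨hmP, hTjm⟩
  have hni : i ∉ P.filter (fun m => T i m) := fun h => hTl i (Finset.mem_filter.mp h).2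
  have hcard : (P.filter (fun m => T i m)).card + 1 ≤ (P.filter (fun m => T j m)).card := by
    rw [← Finset.card_insert_of_notMem hni]
    exact Finset.card_le_card hsub
  have := hmax j hjP
  omega

end CompAux

/-- In a strong semicomplete composition there is an arc between every 3-king
and every non-king; moreover, for every non-king `u` there is a 3-king `v` with
`d(u,v) > 3` which dominates `u`. -/
theorem stmt7 {t : ℕ} (ht : 2 ≤ t) (V : Fin t → Type u) [∀ i, Fintype (V i)]
    [∀ i, Nonempty (V i)] (T : Fin t → Fin t → Prop) (H : ∀ i, V i → V i → Prop)
    (hTl : Loopless T) (hHl : ∀ i, Loopless (H i)) (hsc : Semicomplete T)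
    (hstrong : IsStrong (Comp T V H)) :
    (∀ x : Σ i, V i, IsKKing (Comp T V H) 3 x → ∀ u, ¬ IsKKing (Comp T V H) 3 u →
      Comp T V H x u ∨ Comp T V H u x) ∧
    (∀ u : Σ i, V i, ¬ IsKKing (Comp T V H) 3 u →
      ∃ v, IsKKing (Comp T V H) 3 v ∧ ¬ ReachIn (Comp T V H) 3 u v ∧ Comp T V H v u) := by
  classical
  have lemB : ∀ {a b : Σ i, V i}, a.1 = b.1 → ReachIn (Comp T V H) 3 a b :=
    fun hab => reach_same ht hsc hstrong hab
  constructor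
  · intro x hx u hu
    by_contra hadj
    push_neg at hadj
    have hxu : x.1 = u.1 := by
      by_contra hne
      rcases hsc x.1 u.1 hne with h | h
      · exact hadj.1 (Or.inl h)
      · exact hadj.2 (Or.inl h)
    apply hu
    intro y
    by_cases hy : y.1 = u.1
    · exact lemB hy.symm
    · exact shortcut u (hx y) hxu hy
  · intro u hu
    have hex : ∃ y, ¬ ReachIn (Comp T V H) 3 u y := by
      by_contra h; push_neg at h; exact hu h
    obtain ⟨y0, hy0⟩ := hex
    have fa : ∀ v : Σ i, V i, ¬ ReachIn (Comp T V H) 3 u v → v.1 ≠ u.1 :=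
      fun v hv hvu => hv (lemB hvu.symm)
    have fb : ∀ v, ¬ ReachIn (Comp T V H) 3 u v → Comp T V H v u := by
      intro v hv
      rcases hsc u.1 v.1 (fun e => fa v hv e.symm) with h | h
      · exact absurd (comp_arc_reach3 (Or.inl h)) hv
      · exact Or.inl h
    have fc : ∀ v, ¬ ReachIn (Comp T V H) 3 u v →
        ∀ w, ReachIn (Comp T V H) 2 u w → Comp T V H v w := by
      intro v hv w hw
      have hvw1 : v.1 ≠ w.1 := by
        intro he
        apply hv
        rcases hw with heuw | ⟨p, hup, h1⟩
        · exact absurd (he.trans (congrArg Sigma.fst heuw).symm) (fa v hv)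
        · rcases h1 with hpw | ⟨q, hpq, h0⟩
          · have hpw1 : p.1 = w.1 := congrArg Sigma.fst hpw
            have hT : T u.1 p.1 :=
              comp_part_arc hup (fun e => fa v hv (he.trans (hpw1.symm.trans e.symm)))
            exact comp_arc_reach3 (Or.inl (show T u.1 v.1 by rw [he, ← hpw1]; exact hT))
          · have hqw : q = w := h0
            by_cases hp : p.1 = v.1
            · have hT : T u.1 p.1 :=
                comp_part_arc hup (by rw [hp]; exact fun e => fa v hv e.symm)
              exact comp_arc_reach3 (Or.inl (by rw [← hp]; exact hT))
            · have hT : T p.1 q.1 :=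
                comp_part_arc hpq (by rw [hqw, ← he]; exact hp)
              have hpv : Comp T V H p v :=
                Or.inl (by rw [he, ← hqw]; exact hT)
              exact Or.inr ⟨p, hup, Or.inr ⟨v, hpv, reachIn_refl _ 1 v⟩⟩
      have hnwv : ¬ Comp T V H w v := fun h => hv (reachIn_tail hw h)
      rcases hsc v.1 w.1 hvw1 with h | h
      · exact Or.inl h
      · exact absurd (Or.inl h : Comp T V H w v) hnwv
    set P : Finset (Fin t) :=
      Finset.univ.filter (fun j => ∃ x : V j, ¬ ReachIn (Comp T V H) 3 u ⟨j, x⟩) with hP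
    have hPne : P.Nonempty :=
      ⟨y0.1, Finset.mem_filter.mpr ⟨Finset.mem_univ _, ⟨y0.2, hy0⟩⟩⟩
    obtain ⟨i, hiP, hking2⟩ := two_king hTl hsc P hPne
    obtain ⟨xv, hxv⟩ : ∃ x : V i, ¬ ReachIn (Comp T V H) 3 u ⟨i, x⟩ :=
      (Finset.mem_filter.mp hiP).2
    refine ⟨⟨i, xv⟩, ?_, hxv, fb _ hxv⟩
    intro y
    by_cases hy : ReachIn (Comp T V H) 3 u y
    · rcases reachIn_succ_iff.mp hy with h2 | ⟨w, hw, hwy⟩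
      · exact comp_arc_reach3 (fc _ hxv y h2)
      · exact Or.inr ⟨w, fc _ hxv w hw, Or.inr ⟨y, hwy, reachIn_refl _ 1 y⟩⟩
    · have hyP : y.1 ∈ P :=
        Finset.mem_filter.mpr ⟨Finset.mem_univ _, ⟨y.2, hy⟩⟩
      rcases hking2 y.1 hyP with he | hT | ⟨m, hTim, hTmy⟩
      · exact lemB he
      · exact comp_arc_reach3 (Or.inl hT)
      · exact Or.inr ⟨⟨m, Classical.arbitrary _⟩, Or.inl hTim,
          Or.inr ⟨y, Or.inl hTmy, reachIn_refl _ 1 y⟩⟩
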